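/- Let φ: ℝ → ℝ be C³ with α ≤ φ''(x) ≤ β for all x and some constants 0 < α ≤ β, and let μ = e^{-f}·Leb be a probability measure on ℝ with f ∈ C¹(ℝ). For t ∈ [0,1] set T_t'(x) := 1 + t(φ''(x) − 1). Assume ∫ (f')²/φ'' dμ, ∫ |f' φ'''|/(φ'')² dμ, and ∫ (φ''')²/(φ'')³ dμ are all finite. Then ∫₀¹ ∫ ( (f'(x) + t·φ'''(x)/T_t'(x)) / T_t'(x) )² dμ(x) dt = ∫ [ (f'(x))²/φ''(x) + f'(x)φ'''(x)/(φ''(x))² + (1/3)·(φ'''(x))²/(φ''(x))³ ] dμ(x). -/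

import Mathlib

open MeasureTheory

lemma tIntegral (A c g : ℝ) (hg : 0 < g) :
    (∫ t in (0:ℝ)..1, ((A + t * c / (1 + t * (g - 1))) / (1 + t * (g - 1))) ^ 2)
      = A ^ 2 / g + A * c / g ^ 2 + 1 / 3 * c ^ 2 / g ^ 3 := by
  have hD : ∀ t ∈ Set.uIcc (0:ℝ) 1, 0 < 1 + t * (g - 1) := by
    intro t ht
    rw [Set.uIcc_of_le zero_le_one] at ht
    nlinarith [ht.1, ht.2, mul_nonneg ht.1 hg.le]
  have hcont : ContinuousOn
      (fun t => ((A + t * c / (1 + t * (g - 1))) / (1 + t * (g - 1))) ^ 2)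
      (Set.uIcc (0:ℝ) 1) := by
    apply ContinuousOn.pow
    apply ContinuousOn.div
    · exact continuousOn_const.add ((continuousOn_id.mul continuousOn_const).div
        (by fun_prop) (fun t ht => (hD t ht).ne'))
    · fun_prop
    · exact fun t ht => (hD t ht).ne'
  have hint : IntervalIntegrable
      (fun t => ((A + t * c / (1 + t * (g - 1))) / (1 + t * (g - 1))) ^ 2)
      volume 0 1 := hcont.intervalIntegrable
  by_cases hk : g = 1
  · subst hk
    simp only [sub_self, mul_zero, add_zero, div_one]
    rw [intervalIntegral.integral_eq_sub_of_hasDerivAt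
      (f := fun t => A ^ 2 * t + A * c * t ^ 2 + c ^ 2 * t ^ 3 / 3)
      (f' := fun t => (A + t * c) ^ 2)]
    · norm_num; ring
    · intro t _
      have h1 : HasDerivAt (fun x : ℝ => x) 1 t := hasDerivAt_id t
      have h2 : HasDerivAt (fun x : ℝ => x ^ 2) (2 * t) t := by
        simpa using hasDerivAt_pow 2 t
      have h3 : HasDerivAt (fun x : ℝ => x ^ 3) (3 * t ^ 2) t := by
        simpa using hasDerivAt_pow 3 t
      have := ((h1.const_mul (A ^ 2)).add (h2.const_mul (A * c))).add
        ((h3.const_mul (c ^ 2)).div_const 3)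
      convert this using 1
      · rfl
      ring
    · simpa using hint
  · set k := g - 1 with hkdef
    have hk0 : k ≠ 0 := sub_ne_zero.mpr hk
    set B := A * k + c with hB
    set p2 := -B ^ 2 / k with hp2
    set p1 := -(B * (B + A * k)) / k ^ 2 with hp1
    set p0 := -(B ^ 2 + A * B * k + A ^ 2 * k ^ 2) / (3 * k ^ 3) with hp0
    rw [intervalIntegral.integral_eq_sub_of_hasDerivAt
      (f := fun t => (p0 + p1 * t + p2 * t ^ 2) / (1 + t * k) ^ 3)
      (f' := fun t => ((A + t * c / (1 + t * k)) / (1 + t * k)) ^ 2)]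
    · have hg0 : g ≠ 0 := hg.ne'
      have h1k : (1 : ℝ) + k = g := by rw [hkdef]; ring
      rw [hp0, hp1, hp2, hB]
      have h1k0 : (1 : ℝ) + k ≠ 0 := by rw [h1k]; exact hg0
      rw [← h1k]
      field_simp
      ring
    · intro t ht
      have hDt : (0:ℝ) < 1 + t * k := hD t ht
      have h1 : HasDerivAt (fun x : ℝ => x) 1 t := hasDerivAt_id t
      have h2 : HasDerivAt (fun x : ℝ => x ^ 2) (2 * t) t := by
        simpa using hasDerivAt_pow 2 t
      have hnum : HasDerivAt (fun t => p0 + p1 * t + p2 * t ^ 2)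
          (p1 + p2 * (2 * t)) t := by
        have := ((h1.const_mul p1).const_add p0).add (h2.const_mul p2)
        refine this.congr_deriv ?_
        ring
      have hden : HasDerivAt (fun t => (1 + t * k) ^ 3)
          (3 * (1 + t * k) ^ 2 * k) t := by
        have h0 : HasDerivAt (fun t : ℝ => 1 + t * k) k t := by
          have := ((hasDerivAt_id t).mul_const k).const_add 1
          simpa using this
        have := h0.pow 3
        norm_num at this
        exact this
      have := hnum.div hden (by positivity)
      rw [show ((fun t => p0 + p1 * t + p2 * t ^ 2) / fun t => (1 + t * k) ^ 3)
        = fun t => (p0 + p1 * t + p2 * t ^ 2) / (1 + t * k) ^ 3 from rfl] at this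
      refine this.congr_deriv ?_
      rw [hp0, hp1, hp2, hB]
      have hDt0 : (1 : ℝ) + t * k ≠ 0 := hDt.ne'
      have hDt1 : (1 : ℝ) + k * t ≠ 0 := by rw [mul_comm]; exact hDt0
      field_simp
      ring
    · exact hint

theorem stmt15 (φ : ℝ → ℝ) (hφ : ContDiff ℝ 3 φ)
    (a b : ℝ) (ha : 0 < a) (hab : a ≤ b)
    (hbound : ∀ x, a ≤ deriv (deriv φ) x ∧ deriv (deriv φ) x ≤ b)
    (f : ℝ → ℝ) (hf : ContDiff ℝ 1 f)
    (μ : Measure ℝ)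
    (hμ : μ = volume.withDensity fun x => ENNReal.ofReal (Real.exp (-f x)))
    [IsProbabilityMeasure μ]
    (h1 : Integrable (fun x => (deriv f x) ^ 2 / deriv (deriv φ) x) μ)
    (h2 : Integrable
      (fun x => |deriv f x * deriv (deriv (deriv φ)) x| / (deriv (deriv φ) x) ^ 2) μ)
    (h3 : Integrable
      (fun x => (deriv (deriv (deriv φ)) x) ^ 2 / (deriv (deriv φ) x) ^ 3) μ) :
    (∫ t in (0:ℝ)..1, ∫ x,
        ((deriv f x + t * deriv (deriv (deriv φ)) x / (1 + t * (deriv (deriv φ) x - 1)))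
            / (1 + t * (deriv (deriv φ) x - 1))) ^ 2 ∂μ)
      = ∫ x, ((deriv f x) ^ 2 / deriv (deriv φ) x
          + deriv f x * deriv (deriv (deriv φ)) x / (deriv (deriv φ) x) ^ 2
          + (1 / 3) * (deriv (deriv (deriv φ)) x) ^ 2 / (deriv (deriv φ) x) ^ 3) ∂μ := by
  set A := deriv f with hA
  set g := deriv (deriv φ) with hg
  set c := deriv (deriv (deriv φ)) with hc
  -- continuity
  have hAc : Continuous A := hf.continuous_deriv le_rfl
  have hφ0 : ContDiff ℝ (2+1) φ := by norm_num; exact hφ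
  have hφ1 : ContDiff ℝ 2 (deriv φ) := (contDiff_succ_iff_deriv.mp hφ0).2.2
  have hφ1' : ContDiff ℝ (1+1) (deriv φ) := by norm_num; exact hφ1
  have hφ2 : ContDiff ℝ 1 g := (contDiff_succ_iff_deriv.mp hφ1').2.2
  have hgc : Continuous g := hφ2.continuous
  have hcc : Continuous c := hφ2.continuous_deriv le_rfl
  have hgpos : ∀ x, 0 < g x := fun x => lt_of_lt_of_le ha (hbound x).1
  have hb : (0:ℝ) < b := lt_of_lt_of_le ha hab
  -- the constant m
  set m := min a 1 with hm
  have hm0 : 0 < m := lt_min ha one_pos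
  -- integrability of A^2 and c^2
  have hA2 : Integrable (fun x => (A x) ^ 2) μ := by
    apply (h1.const_mul b).mono' ((hAc.pow 2).aestronglyMeasurable)
    filter_upwards with x
    have hgx := hgpos x
    have hgb := (hbound x).2
    rw [Real.norm_eq_abs, abs_of_nonneg (sq_nonneg _)]
    calc (A x) ^ 2 = b * ((A x) ^ 2 / b) := by
          rw [mul_div_cancel₀ _ hb.ne']
      _ ≤ b * ((A x) ^ 2 / g x) := by
          apply mul_le_mul_of_nonneg_left _ (le_trans ha.le hab)
          exact div_le_div_of_nonneg_left (sq_nonneg _) hgx hgb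
  have hc2 : Integrable (fun x => (c x) ^ 2) μ := by
    apply (h3.const_mul (b ^ 3)).mono' ((hcc.pow 2).aestronglyMeasurable)
    filter_upwards with x
    have hgx := hgpos x
    have hgb := (hbound x).2
    have hb3 : (0:ℝ) < b ^ 3 := by positivity
    rw [Real.norm_eq_abs, abs_of_nonneg (sq_nonneg _)]
    calc (c x) ^ 2 = b ^ 3 * ((c x) ^ 2 / b ^ 3) := by
          rw [mul_div_cancel₀ _ hb3.ne']
      _ ≤ b ^ 3 * ((c x) ^ 2 / (g x) ^ 3) := by
          apply mul_le_mul_of_nonneg_left _ hb3.le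
          exact div_le_div_of_nonneg_left (sq_nonneg _) (by positivity)
            (pow_le_pow_left₀ hgx.le hgb 3)
  -- bound function
  set C := fun x => 2 * (A x) ^ 2 / m ^ 2 + 2 * (c x) ^ 2 / m ^ 4 with hC
  have hCc : Continuous C := by fun_prop
  have hCint : Integrable C μ :=
    ((hA2.const_mul 2).div_const (m ^ 2)).add ((hc2.const_mul 2).div_const (m ^ 4))
  -- the restricted measure
  set ν := volume.restrict (Set.Ioc (0:ℝ) 1) with hν
  haveI : IsFiniteMeasure ν := by
    constructor
    rw [hν, Measure.restrict_apply_univ]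
    simp [Real.volume_Ioc]
  -- measurability of the joint integrand
  have hGm : AEStronglyMeasurable
      (fun p : ℝ × ℝ =>
        ((A p.2 + p.1 * c p.2 / (1 + p.1 * (g p.2 - 1))) / (1 + p.1 * (g p.2 - 1))) ^ 2)
      (ν.prod μ) := by
    apply Measurable.aestronglyMeasurable
    have hA' : Measurable fun p : ℝ × ℝ => A p.2 := (hAc.measurable).comp measurable_snd
    have hc' : Measurable fun p : ℝ × ℝ => c p.2 := (hcc.measurable).comp measurable_snd
    have hg' : Measurable fun p : ℝ × ℝ => g p.2 := (hgc.measurable).comp measurable_snd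
    have hD' : Measurable fun p : ℝ × ℝ => 1 + p.1 * (g p.2 - 1) :=
      (measurable_fst.mul (hg'.sub measurable_const)).const_add 1
    exact ((hA'.add ((measurable_fst.mul hc').div hD')).div hD').pow measurable_const
  -- ae membership of first coordinate
  have hp1 : ∀ᵐ p : ℝ × ℝ ∂(ν.prod μ), p.1 ∈ Set.Ioc (0:ℝ) 1 := by
    rw [ae_iff]
    have hset : {p : ℝ × ℝ | ¬ p.1 ∈ Set.Ioc (0:ℝ) 1}
        = (Set.Ioc (0:ℝ) 1)ᶜ ×ˢ Set.univ := by
      ext p; simp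
    rw [hset, Measure.prod_prod, hν, Measure.restrict_apply measurableSet_Ioc.compl]
    simp
  -- pointwise bound
  have hGbound : ∀ᵐ p : ℝ × ℝ ∂(ν.prod μ),
      ‖((A p.2 + p.1 * c p.2 / (1 + p.1 * (g p.2 - 1))) / (1 + p.1 * (g p.2 - 1))) ^ 2‖
        ≤ C p.2 := by
    filter_upwards [hp1] with p hp
    obtain ⟨t, x⟩ := p
    simp only at hp ⊢
    have ht0 : 0 < t := hp.1
    have ht1 : t ≤ 1 := hp.2
    have hga := (hbound x).1
    set D := 1 + t * (g x - 1) with hD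
    have hDm : m ≤ D := by
      rcases le_total a 1 with h | h
      · rw [hm, min_eq_left h, hD]
        nlinarith [mul_nonneg ht0.le (sub_nonneg.2 hga)]
      · rw [hm, min_eq_right h, hD]
        nlinarith [mul_nonneg ht0.le (sub_nonneg.2 hga)]
    have hD0 : 0 < D := lt_of_lt_of_le hm0 hDm
    have hu : (t * c x / D) ^ 2 ≤ (c x) ^ 2 / m ^ 2 := by
      rw [div_pow, mul_pow]
      apply div_le_div₀ (sq_nonneg _) _ (by positivity) (by nlinarith)
      have ht2 : t ^ 2 ≤ 1 := by nlinarith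
      nlinarith [mul_le_mul_of_nonneg_left ht2 (sq_nonneg (c x))]
    have houter : (A x + t * c x / D) ^ 2 ≤ 2 * (A x) ^ 2 + 2 * ((c x) ^ 2 / m ^ 2) := by
      nlinarith [sq_nonneg (A x - t * c x / D)]
    rw [Real.norm_eq_abs, abs_of_nonneg (sq_nonneg _), div_pow]
    calc (A x + t * c x / D) ^ 2 / D ^ 2
        ≤ (2 * (A x) ^ 2 + 2 * ((c x) ^ 2 / m ^ 2)) / m ^ 2 := by
          apply div_le_div₀ _ houter (by positivity) (by nlinarith)
          positivity
      _ = C x := by rw [hC]; field_simp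
  -- integrability of the bound on the product
  have hCprod : Integrable (fun p : ℝ × ℝ => C p.2) (ν.prod μ) := by
    have hmap : Measure.map Prod.snd (ν.prod μ) = ν Set.univ • μ := Measure.map_snd_prod
    have : Integrable C (Measure.map Prod.snd (ν.prod μ)) := by
      rw [hmap]; exact hCint.smul_measure (measure_ne_top ν _)
    exact (integrable_map_measure hCc.aestronglyMeasurable
      measurable_snd.aemeasurable).mp this
  -- joint integrability
  have hGint : Integrable
      (Function.uncurry fun t x =>
        ((A x + t * c x / (1 + t * (g x - 1))) / (1 + t * (g x - 1))) ^ 2)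
      (ν.prod μ) := by
    apply Integrable.mono' hCprod hGm
    exact hGbound
  -- Fubini and pointwise evaluation
  rw [intervalIntegral.integral_of_le zero_le_one]
  rw [show (∫ t in Set.Ioc (0:ℝ) 1, ∫ x,
        ((A x + t * c x / (1 + t * (g x - 1))) / (1 + t * (g x - 1))) ^ 2 ∂μ)
      = ∫ x, ∫ t in Set.Ioc (0:ℝ) 1,
        ((A x + t * c x / (1 + t * (g x - 1))) / (1 + t * (g x - 1))) ^ 2 ∂volume ∂μ
    from integral_integral_swap hGint]
  apply integral_congr_ae
  filter_upwards with x
  rw [← intervalIntegral.integral_of_le zero_le_one]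
  exact tIntegral (A x) (c x) (g x) (hgpos x)
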